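/- arXiv:2310.09844 — 4 statements merged into one kernel-verified Lean document; each statement's English description precedes it below -/
import Mathlib

section
/- Solution recovery, part (a). Suppose each of the risk measures ℛ₁,...,ℛ_q is the worst-case risk measure, the risk measure ℛ₀ is monotone, and there exists (F̄,Ḡ) ∈ ℱ × 𝒢 such that for every ω ∈ Ω one has Ḡ(ξ(ω)) ∈ D_ε(δ) and (F̄(ξ(ω)), ℍ(Ḡ(ξ(ω)))) is a minimizer of the actual problem (AP)(ξ(ω)). Then (F̄,Ḡ) is feasible for the training problem (TP) and is a minimizer of (TP). -/
open Filter Finset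

/-- The multivariate Heaviside function. -/
noncomputable def Heav {s : ℕ} (v : EuclideanSpace ℝ (Fin s)) : EuclideanSpace ℝ (Fin s) :=
  WithLp.toLp 2 fun i => if v i ≤ 0 then 0 else 1

/-- The set `D_ε(δ) = ([−δ,−ε] ∪ [ε,δ])^m`, with `δ` possibly infinite. -/
def Dset (m : ℕ) (ε : ℝ) (δ : EReal) : Set (EuclideanSpace ℝ (Fin m)) :=
  {g | ∀ i, ε ≤ |g i| ∧ ((|g i| : ℝ) : EReal) ≤ δ}

/-- Solution recovery, part (a).  If `ℛ₁,…,ℛ_q` are worst-case risk measures,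
`ℛ₀` is monotone, and `(F̄,Ḡ) ∈ ℱ × 𝒢` is such that for every `ω` the pair
`(F̄(ξω), ℍ(Ḡ(ξω)))` minimizes `(AP)(ξω)` with `Ḡ(ξω) ∈ D_ε(δ)`, then `(F̄,Ḡ)` is
feasible for `(TP)` and is a minimizer of `(TP)`. -/
theorem solution_recovery_a
    {r n m q : ℕ} {Ω : Type} [Fintype Ω] [Nonempty Ω]
    (P : Ω → ℝ) (hP : ∀ ω, 0 < P ω) (hPsum : ∑ ω, P ω = 1)
    (ψ : Fin (q + 1) → EuclideanSpace ℝ (Fin r) → EuclideanSpace ℝ (Fin n) →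
      EuclideanSpace ℝ (Fin m) → ℝ)
    (hψcont : ∀ k, Continuous fun p : EuclideanSpace ℝ (Fin r) × EuclideanSpace ℝ (Fin n) ×
      EuclideanSpace ℝ (Fin m) => ψ k p.1 p.2.1 p.2.2)
    (C : Set (EuclideanSpace ℝ (Fin n) × EuclideanSpace ℝ (Fin m)))
    (hCne : C.Nonempty) (hCcl : IsClosed C)
    (hCbin : ∀ p ∈ C, ∀ i, p.2 i = 0 ∨ p.2 i = 1)
    (ℱ : Set (EuclideanSpace ℝ (Fin r) → EuclideanSpace ℝ (Fin n)))
    (𝒢 : Set (EuclideanSpace ℝ (Fin r) → EuclideanSpace ℝ (Fin m)))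
    (hℱcont : ∀ F ∈ ℱ, Continuous F) (h𝒢cont : ∀ G ∈ 𝒢, Continuous G)
    (ξ : Ω → EuclideanSpace ℝ (Fin r))
    (R : Fin (q + 1) → (Ω → ℝ) → ℝ)
    (hRconst : ∀ k (c : ℝ), R k (fun _ => c) = c)
    (hR0mono : ∀ η η' : Ω → ℝ, (∀ ω, η ω ≤ η' ω) → R 0 η ≤ R 0 η')
    (hRworst : ∀ k : Fin q, R k.succ = fun η => ⨆ ω, η ω)
    (ε : ℝ) (hε : 0 < ε) (δ : EReal) (hδ : (ε : EReal) < δ)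
    (Fb : EuclideanSpace ℝ (Fin r) → EuclideanSpace ℝ (Fin n))
    (Gb : EuclideanSpace ℝ (Fin r) → EuclideanSpace ℝ (Fin m))
    (hFb : Fb ∈ ℱ) (hGb : Gb ∈ 𝒢)
    (hD : ∀ ω, Gb (ξ ω) ∈ Dset m ε δ)
    (hAPmin : ∀ ω,
      ((Fb (ξ ω), Heav (Gb (ξ ω))) ∈ C ∧
        (∀ k : Fin q, ψ k.succ (ξ ω) (Fb (ξ ω)) (Heav (Gb (ξ ω))) ≤ 0)) ∧
      (∀ x y, (x, y) ∈ C → (∀ k : Fin q, ψ k.succ (ξ ω) x y ≤ 0) →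
        ψ 0 (ξ ω) (Fb (ξ ω)) (Heav (Gb (ξ ω))) ≤ ψ 0 (ξ ω) x y)) :
    ((∀ k : Fin q,
        R k.succ (fun ω => ψ k.succ (ξ ω) (Fb (ξ ω)) (Heav (Gb (ξ ω)))) ≤ 0) ∧
      (∀ ω, (Fb (ξ ω), Heav (Gb (ξ ω))) ∈ C) ∧ (∀ ω, Gb (ξ ω) ∈ Dset m ε δ)) ∧
    (∀ F ∈ ℱ, ∀ G ∈ 𝒢,
      (∀ k : Fin q,
        R k.succ (fun ω => ψ k.succ (ξ ω) (F (ξ ω)) (Heav (G (ξ ω)))) ≤ 0) →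
      (∀ ω, (F (ξ ω), Heav (G (ξ ω))) ∈ C) →
      (∀ ω, G (ξ ω) ∈ Dset m ε δ) →
      R 0 (fun ω => ψ 0 (ξ ω) (Fb (ξ ω)) (Heav (Gb (ξ ω)))) ≤
        R 0 (fun ω => ψ 0 (ξ ω) (F (ξ ω)) (Heav (G (ξ ω))))) := by
  constructor
  · refine ⟨fun k => ?_, fun ω => (hAPmin ω).1.1, hD⟩
    rw [hRworst k]
    exact ciSup_le fun ω => (hAPmin ω).1.2 k
  · intro F hF G hG hfeas hC hDG
    apply hR0mono
    intro ω
    refine (hAPmin ω).2 _ _ (hC ω) fun k => ?_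
    have := hfeas k
    simp only [hRworst k] at this
    exact (le_ciSup (f := fun ω => ψ k.succ (ξ ω) (F (ξ ω)) (Heav (G (ξ ω)))) (Set.Finite.bddAbove (Set.finite_range _)) ω).trans this
end

section
/- Translation equivariance of convex risk measures on finite spaces. Let Ω be a nonempty finite set and let ℛ : (Ω → ℝ) → ℝ be convex in the sense that ℛ((1−λ)η + λη') ≤ (1−λ)ℛ(η) + λℛ(η') for all λ ∈ [0,1] and all η, η' : Ω → ℝ, and suppose ℛ(η) = c whenever η is the constant function with value c. Then for every η : Ω → ℝ and every c ∈ ℝ, ℛ(η + c) = ℛ(η) + c, where η + c denotes the function ω ↦ η(ω) + c. -/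
/-- Translation equivariance of convex risk measures on finite spaces. -/
theorem translation_equivariance_of_convex_risk
    {Ω : Type} [Fintype Ω] [Nonempty Ω]
    (R : (Ω → ℝ) → ℝ)
    (hconvex : ∀ l : ℝ, 0 ≤ l → l ≤ 1 → ∀ η η' : Ω → ℝ,
      R (fun ω => (1 - l) * η ω + l * η' ω) ≤ (1 - l) * R η + l * R η')
    (hconst : ∀ c : ℝ, R (fun _ => c) = c) :
    ∀ (η : Ω → ℝ) (c : ℝ), R (fun ω => η ω + c) = R η + c := by
  -- R is convex on the whole space
  have hcv : ConvexOn ℝ (Set.univ : Set (Ω → ℝ)) R := by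
    refine ⟨convex_univ, ?_⟩
    intro x _ y _ a b ha hb hab
    have h := hconvex b hb (by linarith) x y
    have h1 : (1 : ℝ) - b = a := by linarith
    rw [h1] at h
    exact h
  -- hence continuous (finite dimensional)
  have hcont : Continuous R := by
    rw [← continuousOn_univ]
    exact hcv.continuousOn isOpen_univ
  have upper : ∀ (η : Ω → ℝ) (c : ℝ), R (fun ω => η ω + c) ≤ R η + c := by
    intro η c
    have key : ∀ l : ℝ, 0 < l → l < 1 →
        R (fun ω => η ω + c) ≤ (1 - l) * R (fun ω => (1 - l)⁻¹ * η ω) + c := by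
      intro l hl0 hl1
      have h := hconvex l hl0.le hl1.le (fun ω => (1 - l)⁻¹ * η ω) (fun _ => c / l)
      have h1 : (1 : ℝ) - l ≠ 0 := by linarith
      have h2 : (fun ω => (1 - l) * ((1 - l)⁻¹ * η ω) + l * (c / l))
          = fun ω => η ω + c := by
        funext ω
        field_simp
      rw [h2, hconst] at h
      calc R (fun ω => η ω + c)
          ≤ (1 - l) * R (fun ω => (1 - l)⁻¹ * η ω) + l * (c / l) := h
        _ = (1 - l) * R (fun ω => (1 - l)⁻¹ * η ω) + c := by
            rw [mul_div_cancel₀ _ hl0.ne']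
    -- continuity of the bound at l = 0
    have hinner : ContinuousAt (fun l : ℝ => (fun ω => (1 - l)⁻¹ * η ω : Ω → ℝ)) 0 := by
      rw [continuousAt_pi]
      intro ω
      exact (((continuousAt_const.sub continuousAt_id).inv₀ (by norm_num)).mul
        continuousAt_const)
    have hca : ContinuousAt
        (fun l : ℝ => (1 - l) * R (fun ω => (1 - l)⁻¹ * η ω) + c) 0 :=
      (((continuousAt_const.sub continuousAt_id).mul
        (hcont.continuousAt.comp hinner)).add continuousAt_const)
    have htend : Filter.Tendsto
        (fun l : ℝ => (1 - l) * R (fun ω => (1 - l)⁻¹ * η ω) + c)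
        (nhdsWithin 0 (Set.Ioi 0)) (nhds (R η + c)) := by
      have := hca.tendsto
      simp only [sub_zero, inv_one, one_mul] at this
      exact this.mono_left nhdsWithin_le_nhds
    have hev : ∀ᶠ l in nhdsWithin (0:ℝ) (Set.Ioi 0),
        R (fun ω => η ω + c) ≤ (1 - l) * R (fun ω => (1 - l)⁻¹ * η ω) + c := by
      filter_upwards [Ioo_mem_nhdsGT_of_mem (Set.mem_Ico.mpr ⟨le_refl (0:ℝ), one_pos⟩)]
        with l hl
      exact key l hl.1 hl.2
    exact ge_of_tendsto htend hev
  intro η c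
  have h1 := upper η c
  have h2 := upper (fun ω => η ω + c) (-c)
  simp only [add_neg_cancel_right] at h2
  linarith
end

section
/- The superquantile risk measure is a monotone and convex measure of risk. Let (Ω, 2^Ω, P) be a finite probability space with Ω nonempty and P(ω) > 0 for all ω ∈ Ω, and let α ∈ (0,1). Then the α-superquantile S_α satisfies: (i) S_α(η) = c whenever η is constant with value c; (ii) S_α(η) ≤ S_α(η') whenever η(ω) ≤ η'(ω) for all ω ∈ Ω (monotonicity); (iii) S_α((1−λ)η + λη') ≤ (1−λ)S_α(η) + λS_α(η') for all λ ∈ [0,1] and all η, η' : Ω → ℝ (convexity). -/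
open Finset

/-- The `α`-quantile of a random variable on a finite probability space. -/
noncomputable def quantile {Ω : Type} [Fintype Ω] (P : Ω → ℝ) (α : ℝ) (η : Ω → ℝ) : ℝ :=
  sInf {z : ℝ | α ≤ ∑ ω ∈ univ.filter (fun ω => η ω ≤ z), P ω}

/-- The `α`-superquantile of a random variable on a finite probability space. -/
noncomputable def superquantile {Ω : Type} [Fintype Ω] (P : Ω → ℝ) (α : ℝ) (η : Ω → ℝ) : ℝ :=
  quantile P α η + (1 / (1 - α)) * ∑ ω, P ω * max 0 (η ω - quantile P α η)

section Aux

variable {Ω : Type} [Fintype Ω] [Nonempty Ω]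

lemma superquantile_def (P : Ω → ℝ) (α : ℝ) (η : Ω → ℝ) :
    superquantile P α η
      = quantile P α η + (1 / (1 - α)) * ∑ ω, P ω * max 0 (η ω - quantile P α η) := rfl

lemma sumG_mono (P : Ω → ℝ) (hP : ∀ ω, 0 < P ω) (η : Ω → ℝ) {z z' : ℝ} (h : z ≤ z') :
    ∑ ω ∈ univ.filter (fun ω => η ω ≤ z), P ω ≤ ∑ ω ∈ univ.filter (fun ω => η ω ≤ z'), P ω := by
  apply Finset.sum_le_sum_of_subset_of_nonneg
  · intro ω hω
    simp only [mem_filter, mem_univ, true_and] at *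
    linarith
  · intro ω _ _
    exact (hP ω).le

lemma qset_nonempty (P : Ω → ℝ) (hPsum : ∑ ω, P ω = 1) (α : ℝ) (hα1 : α < 1) (η : Ω → ℝ) :
    ({z : ℝ | α ≤ ∑ ω ∈ univ.filter (fun ω => η ω ≤ z), P ω}).Nonempty := by
  refine ⟨(univ.image η).max' (by simp), ?_⟩
  have : univ.filter (fun ω => η ω ≤ (univ.image η).max' (by simp)) = univ := by
    apply Finset.filter_true_of_mem
    intro ω _
    exact Finset.le_max' _ _ (by simp)
  simp only [Set.mem_setOf_eq, this, hPsum]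
  linarith

lemma qset_bddBelow (P : Ω → ℝ) (α : ℝ) (hα0 : 0 < α) (η : Ω → ℝ) :
    BddBelow ({z : ℝ | α ≤ ∑ ω ∈ univ.filter (fun ω => η ω ≤ z), P ω}) := by
  refine ⟨(univ.image η).min' (by simp), ?_⟩
  intro z hz
  by_contra hlt
  push_neg at hlt
  have : univ.filter (fun ω => η ω ≤ z) = ∅ := by
    apply Finset.filter_false_of_mem
    intro ω _
    have : (univ.image η).min' (by simp) ≤ η ω := Finset.min'_le _ _ (by simp)
    linarith
  simp only [Set.mem_setOf_eq, this, Finset.sum_empty] at hz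
  linarith

/-- The quantile achieves probability at least `α`. -/
lemma quantile_mem (P : Ω → ℝ) (hP : ∀ ω, 0 < P ω) (hPsum : ∑ ω, P ω = 1)
    (α : ℝ) (hα0 : 0 < α) (hα1 : α < 1) (η : Ω → ℝ) :
    α ≤ ∑ ω ∈ univ.filter (fun ω => η ω ≤ quantile P α η), P ω := by
  set q := quantile P α η with hq
  set T := univ.filter (fun ω => q < η ω) with hT
  set z : ℝ := if h : T.Nonempty then q + (T.inf' h (fun ω => η ω - q)) / 2 else q + 1 with hzdef
  have hqz : q < z := by
    rw [hzdef]
    split_ifs with h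
    · have : 0 < T.inf' h (fun ω => η ω - q) := by
        rw [Finset.lt_inf'_iff]
        intro ω hω
        simp only [hT, mem_filter, mem_univ, true_and] at hω
        linarith
      linarith
    · linarith
  have hfeq : univ.filter (fun ω => η ω ≤ z) = univ.filter (fun ω => η ω ≤ q) := by
    ext ω
    simp only [mem_filter, mem_univ, true_and]
    constructor
    · intro hle
      by_contra hgt
      push_neg at hgt
      have hωT : ω ∈ T := by simp [hT, hgt]
      have h1 : T.inf' ⟨ω, hωT⟩ (fun ω => η ω - q) ≤ η ω - q := Finset.inf'_le _ hωT
      rw [hzdef] at hle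
      rw [dif_pos ⟨ω, hωT⟩] at hle
      have h2 : 0 < T.inf' ⟨ω, hωT⟩ (fun ω => η ω - q) := by
        apply (Finset.lt_inf'_iff _).2
        intro ω' hω'
        simp only [hT, mem_filter, mem_univ, true_and] at hω'
        linarith
      linarith
    · intro hle; linarith
  obtain ⟨z', hz', hz'lt⟩ := Real.lt_sInf_add_pos (qset_nonempty P hPsum α hα1 η) (show (0:ℝ) < z - q by linarith)
  have : α ≤ ∑ ω ∈ univ.filter (fun ω => η ω ≤ z'), P ω := hz'
  calc α ≤ ∑ ω ∈ univ.filter (fun ω => η ω ≤ z'), P ω := hz'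
    _ ≤ ∑ ω ∈ univ.filter (fun ω => η ω ≤ z), P ω := by
        apply sumG_mono P hP η
        have : sInf {z : ℝ | α ≤ ∑ ω ∈ univ.filter (fun ω => η ω ≤ z), P ω} = q := rfl
        linarith [hz'lt]
    _ = ∑ ω ∈ univ.filter (fun ω => η ω ≤ q), P ω := by rw [hfeq]

/-- The probability strictly below the quantile is at most `α`. -/
lemma lt_quantile_le (P : Ω → ℝ) (hP : ∀ ω, 0 < P ω) (hPsum : ∑ ω, P ω = 1)
    (α : ℝ) (hα0 : 0 < α) (hα1 : α < 1) (η : Ω → ℝ) :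
    ∑ ω ∈ univ.filter (fun ω => η ω < quantile P α η), P ω ≤ α := by
  set q := quantile P α η with hq
  set T := univ.filter (fun ω => η ω < q) with hT
  rcases T.eq_empty_or_nonempty with h | h
  · rw [h, Finset.sum_empty]; linarith
  set z : ℝ := q - (T.inf' h (fun ω => q - η ω)) / 2 with hzdef
  have hinfpos : 0 < T.inf' h (fun ω => q - η ω) := by
    rw [Finset.lt_inf'_iff]
    intro ω hω
    simp only [hT, mem_filter, mem_univ, true_and] at hω
    linarith
  have hzq : z < q := by rw [hzdef]; linarith
  have hfeq : univ.filter (fun ω => η ω ≤ z) = T := by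
    ext ω
    simp only [hT, mem_filter, mem_univ, true_and]
    constructor
    · intro hle; linarith
    · intro hlt
      have hωT : ω ∈ T := by simp [hT, hlt]
      have h1 : T.inf' h (fun ω => q - η ω) ≤ q - η ω := Finset.inf'_le _ hωT
      rw [hzdef]; linarith
  have hznot : z ∉ {z : ℝ | α ≤ ∑ ω ∈ univ.filter (fun ω => η ω ≤ z), P ω} := by
    intro hmem
    have h2 := csInf_le (qset_bddBelow P α hα0 η) hmem
    have h3 : q ≤ z := h2
    linarith
  simp only [Set.mem_setOf_eq, not_le] at hznot
  rw [hfeq] at hznot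
  linarith

/-- Rockafellar–Uryasev: the superquantile is the min of `z + E[max 0 (η - z)]/(1-α)`. -/
lemma superquantile_le (P : Ω → ℝ) (hP : ∀ ω, 0 < P ω) (hPsum : ∑ ω, P ω = 1)
    (α : ℝ) (hα0 : 0 < α) (hα1 : α < 1) (η : Ω → ℝ) (z : ℝ) :
    superquantile P α η ≤ z + (1 / (1 - α)) * ∑ ω, P ω * max 0 (η ω - z) := by
  have h1α : 0 < 1 - α := by linarith
  have hc : (1 / (1 - α)) * (1 - α) = 1 := by field_simp
  have hcpos : 0 < 1 / (1 - α) := by positivity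
  set q := quantile P α η with hq
  rw [superquantile, ← hq]
  rcases le_or_gt q z with hz | hz
  · -- case q ≤ z
    have hA := quantile_mem P hP hPsum α hα0 hα1 η
    rw [← hq] at hA
    have hsplit : ∑ ω ∈ univ.filter (fun ω => η ω ≤ q), P ω
        + ∑ ω ∈ univ.filter (fun ω => ¬ η ω ≤ q), P ω = 1 := by
      rw [Finset.sum_filter_add_sum_filter_not]; exact hPsum
    have hkey : ∑ ω, P ω * max 0 (η ω - q) - ∑ ω, P ω * max 0 (η ω - z)
        ≤ (z - q) * ∑ ω ∈ univ.filter (fun ω => ¬ η ω ≤ q), P ω := by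
      rw [Finset.mul_sum, Finset.sum_filter, ← Finset.sum_sub_distrib]
      apply Finset.sum_le_sum
      intro ω _
      have hPω := (hP ω).le
      split_ifs with h
      · simp only [max_def]
        split_ifs <;> nlinarith
      · push_neg at h
        simp only [max_def]
        split_ifs <;> nlinarith
    have hfrac : ∑ ω ∈ univ.filter (fun ω => ¬ η ω ≤ q), P ω ≤ 1 - α := by linarith
    have hfracnn : 0 ≤ ∑ ω ∈ univ.filter (fun ω => ¬ η ω ≤ q), P ω :=
      Finset.sum_nonneg (fun ω _ => (hP ω).le)
    nlinarith [mul_le_mul_of_nonneg_left hkey hcpos.le,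
      mul_le_mul_of_nonneg_left hfrac (mul_nonneg hcpos.le (sub_nonneg.2 hz))]
  · -- case z < q
    have hB := lt_quantile_le P hP hPsum α hα0 hα1 η
    rw [← hq] at hB
    have hsplit : ∑ ω ∈ univ.filter (fun ω => η ω < q), P ω
        + ∑ ω ∈ univ.filter (fun ω => ¬ η ω < q), P ω = 1 := by
      rw [Finset.sum_filter_add_sum_filter_not]; exact hPsum
    have hkey : ∑ ω, P ω * max 0 (η ω - q) - ∑ ω, P ω * max 0 (η ω - z)
        ≤ (z - q) * ∑ ω ∈ univ.filter (fun ω => ¬ η ω < q), P ω := by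
      rw [Finset.mul_sum, Finset.sum_filter, ← Finset.sum_sub_distrib]
      apply Finset.sum_le_sum
      intro ω _
      have hPω := (hP ω).le
      split_ifs with h
      · simp only [max_def]
        split_ifs <;> nlinarith
      · push_neg at h
        simp only [max_def]
        split_ifs <;> nlinarith
    have hfrac : 1 - α ≤ ∑ ω ∈ univ.filter (fun ω => ¬ η ω < q), P ω := by linarith
    nlinarith [mul_le_mul_of_nonneg_left hkey hcpos.le,
      mul_le_mul_of_nonneg_left hfrac (mul_nonneg hcpos.le (sub_nonneg.2 hz.le))]

end Aux

/-- The superquantile risk measure is a monotone and convex measure of risk. -/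
theorem superquantile_const_monotone_convex
    {Ω : Type} [Fintype Ω] [Nonempty Ω]
    (P : Ω → ℝ) (hP : ∀ ω, 0 < P ω) (hPsum : ∑ ω, P ω = 1)
    (α : ℝ) (hα0 : 0 < α) (hα1 : α < 1) :
    (∀ c : ℝ, superquantile P α (fun _ => c) = c) ∧
    (∀ η η' : Ω → ℝ, (∀ ω, η ω ≤ η' ω) → superquantile P α η ≤ superquantile P α η') ∧
    (∀ l : ℝ, 0 ≤ l → l ≤ 1 → ∀ η η' : Ω → ℝ,
      superquantile P α (fun ω => (1 - l) * η ω + l * η' ω) ≤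
        (1 - l) * superquantile P α η + l * superquantile P α η') := by
  have h1α : 0 < 1 - α := by linarith
  have hcpos : 0 < 1 / (1 - α) := by positivity
  refine ⟨?_, ?_, ?_⟩
  · -- constant
    intro c
    have hqc : quantile P α (fun _ => c) = c := by
      rw [quantile]
      have hset : {z : ℝ | α ≤ ∑ ω ∈ univ.filter (fun ω => (fun _ : Ω => c) ω ≤ z), P ω}
          = Set.Ici c := by
        ext z
        simp only [Set.mem_setOf_eq, Set.mem_Ici]
        constructor
        · intro hz
          by_contra hlt
          push_neg at hlt
          have : univ.filter (fun ω : Ω => c ≤ z) = ∅ := by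
            apply Finset.filter_false_of_mem
            intro ω _
            linarith
          rw [this, Finset.sum_empty] at hz
          linarith
        · intro hz
          have : univ.filter (fun ω : Ω => c ≤ z) = univ := by
            apply Finset.filter_true_of_mem
            intro ω _
            exact hz
          rw [this, hPsum]
          linarith
      rw [hset, csInf_Ici]
    rw [superquantile, hqc]
    simp
  · -- monotone
    intro η η' hle
    have h1 : superquantile P α η ≤ quantile P α η'
        + (1 / (1 - α)) * ∑ ω, P ω * max 0 (η ω - quantile P α η') :=
      superquantile_le P hP hPsum α hα0 hα1 η (quantile P α η')
    have h2 : ∑ ω, P ω * max 0 (η ω - quantile P α η')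
        ≤ ∑ ω, P ω * max 0 (η' ω - quantile P α η') := by
      apply Finset.sum_le_sum
      intro ω _
      apply mul_le_mul_of_nonneg_left _ (hP ω).le
      exact max_le_max le_rfl (by linarith [hle ω])
    rw [superquantile_def P α η']
    nlinarith [mul_le_mul_of_nonneg_left h2 hcpos.le]
  · -- convex
    intro l hl0 hl1 η η'
    set q1 := quantile P α η with hq1
    set q2 := quantile P α η' with hq2
    have h1 : superquantile P α (fun ω => (1 - l) * η ω + l * η' ω)
        ≤ ((1 - l) * q1 + l * q2) + (1 / (1 - α)) *
          ∑ ω, P ω * max 0 ((1 - l) * η ω + l * η' ω - ((1 - l) * q1 + l * q2)) :=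
      superquantile_le P hP hPsum α hα0 hα1 _ _
    have h2 : ∑ ω, P ω * max 0 ((1 - l) * η ω + l * η' ω - ((1 - l) * q1 + l * q2))
        ≤ (1 - l) * ∑ ω, P ω * max 0 (η ω - q1) + l * ∑ ω, P ω * max 0 (η' ω - q2) := by
      rw [Finset.mul_sum, Finset.mul_sum, ← Finset.sum_add_distrib]
      apply Finset.sum_le_sum
      intro ω _
      have hPω := (hP ω).le
      have hm1 : η ω - q1 ≤ max 0 (η ω - q1) := le_max_right _ _
      have hm1' : (0:ℝ) ≤ max 0 (η ω - q1) := le_max_left _ _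
      have hm2 : η' ω - q2 ≤ max 0 (η' ω - q2) := le_max_right _ _
      have hm2' : (0:ℝ) ≤ max 0 (η' ω - q2) := le_max_left _ _
      have : max 0 ((1 - l) * η ω + l * η' ω - ((1 - l) * q1 + l * q2))
          ≤ (1 - l) * max 0 (η ω - q1) + l * max 0 (η' ω - q2) := by
        apply max_le
        · nlinarith
        · nlinarith
      nlinarith
    rw [superquantile_def P α η, superquantile_def P α η', ← hq1, ← hq2]
    nlinarith
end

section
/- Rockafellar–Uryasev representation of the superquantile. Let (Ω, 2^Ω, P) be a finite probability space with Ω nonempty and P(ω) > 0 for all ω ∈ Ω, let α ∈ (0,1), and let η : Ω → ℝ. Then S_α(η) = min_{z∈ℝ} [ z + (1/(1−α)) Σ_{ω∈Ω} P(ω)·max{0, η(ω) − z} ], and the minimum on the right-hand side is attained at z = Q_α(η). -/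
open Finset

lemma quantile_isLeast {Ω : Type} [Fintype Ω] [Nonempty Ω]
    (P : Ω → ℝ) (hP : ∀ ω, 0 < P ω) (hPsum : ∑ ω, P ω = 1)
    (α : ℝ) (hα0 : 0 < α) (hα1 : α < 1) (η : Ω → ℝ) :
    IsLeast {z : ℝ | α ≤ ∑ ω ∈ univ.filter (fun ω => η ω ≤ z), P ω} (quantile P α η) := by
  set S : Set ℝ := {z : ℝ | α ≤ ∑ ω ∈ univ.filter (fun ω => η ω ≤ z), P ω} with hS
  set A : Finset Ω := univ.filter
    (fun ω₀ => α ≤ ∑ ω ∈ univ.filter (fun ω => η ω ≤ η ω₀), P ω) with hA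
  have hAne : A.Nonempty := by
    obtain ⟨ω₁, -, hω₁⟩ := Finset.exists_max_image (univ : Finset Ω) η univ_nonempty
    refine ⟨ω₁, ?_⟩
    simp only [hA, mem_filter, mem_univ, true_and]
    have : (univ.filter (fun ω => η ω ≤ η ω₁)) = univ := by
      ext ω; simp [hω₁ ω (mem_univ ω)]
    rw [this, hPsum]; linarith
  obtain ⟨ω₀, hω₀A, hω₀min⟩ := Finset.exists_min_image A η hAne
  have hmem : η ω₀ ∈ S := by
    simpa [hA, hS] using (mem_filter.mp hω₀A).2
  have hlb : ∀ z ∈ S, η ω₀ ≤ z := by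
    intro z hz
    have hBne : (univ.filter (fun ω => η ω ≤ z)).Nonempty := by
      by_contra h
      rw [Finset.not_nonempty_iff_eq_empty] at h
      rw [hS] at hz
      simp only [Set.mem_setOf_eq, h, Finset.sum_empty] at hz
      linarith
    obtain ⟨ω', hω'B, hω'max⟩ := Finset.exists_max_image _ η hBne
    have hω'z : η ω' ≤ z := (mem_filter.mp hω'B).2
    have heq : (univ.filter (fun ω => η ω ≤ η ω')) = (univ.filter (fun ω => η ω ≤ z)) := by
      ext ω
      simp only [mem_filter, mem_univ, true_and]
      constructor
      · intro h; exact h.trans hω'z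
      · intro h; exact hω'max ω (by simp [h])
    have : ω' ∈ A := by
      simp only [hA, mem_filter, mem_univ, true_and]
      rw [heq]
      exact hz
    exact (hω₀min ω' this).trans hω'z
  have h2 : sInf S = η ω₀ := IsLeast.csInf_eq ⟨hmem, hlb⟩
  show IsLeast S (sInf S)
  rw [h2]
  exact ⟨hmem, hlb⟩

/-- Rockafellar–Uryasev representation of the superquantile: the superquantile
is the minimum over `z` of `z + (1/(1-α)) Σ P(ω) max{0, η(ω) − z}`, attained at `z = Q_α(η)`. -/
theorem rockafellar_uryasev_representation
    {Ω : Type} [Fintype Ω] [Nonempty Ω]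
    (P : Ω → ℝ) (hP : ∀ ω, 0 < P ω) (hPsum : ∑ ω, P ω = 1)
    (α : ℝ) (hα0 : 0 < α) (hα1 : α < 1) (η : Ω → ℝ) :
    IsLeast
        {v : ℝ | ∃ z : ℝ, v = z + (1 / (1 - α)) * ∑ ω, P ω * max 0 (η ω - z)}
        (superquantile P α η) ∧
      superquantile P α η =
        quantile P α η + (1 / (1 - α)) * ∑ ω, P ω * max 0 (η ω - quantile P α η) := by
  obtain ⟨hqmem, hqlb⟩ := quantile_isLeast P hP hPsum α hα0 hα1 η
  set q := quantile P α η with hq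
  have h1α : (0:ℝ) < 1 - α := by linarith
  -- F q ≥ α
  have hFq : α ≤ ∑ ω ∈ univ.filter (fun ω => η ω ≤ q), P ω := hqmem
  -- P(η < q) ≤ α
  have hlt : ∑ ω ∈ univ.filter (fun ω => η ω < q), P ω ≤ α := by
    rcases Finset.eq_empty_or_nonempty (univ.filter (fun ω => η ω < q)) with hC | hC
    · rw [hC, Finset.sum_empty]; linarith
    · obtain ⟨ω', hω'C, hω'max⟩ := Finset.exists_max_image _ η hC
      have hω'q : η ω' < q := (mem_filter.mp hω'C).2
      have hnot : η ω' ∉ {z : ℝ | α ≤ ∑ ω ∈ univ.filter (fun ω => η ω ≤ z), P ω} := by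
        intro h
        exact absurd (hqlb h) (not_le.mpr hω'q)
      have hFlt : ∑ ω ∈ univ.filter (fun ω => η ω ≤ η ω'), P ω < α := not_le.mp hnot
      have hsub : (univ.filter (fun ω => η ω < q)) ⊆ (univ.filter (fun ω => η ω ≤ η ω')) := by
        intro ω hω
        simp only [mem_filter, mem_univ, true_and] at hω ⊢
        exact hω'max ω (by simp [hω])
      calc ∑ ω ∈ univ.filter (fun ω => η ω < q), P ω
          ≤ ∑ ω ∈ univ.filter (fun ω => η ω ≤ η ω'), P ω :=
            Finset.sum_le_sum_of_subset_of_nonneg hsub (fun ω _ _ => (hP ω).le)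
        _ ≤ α := hFlt.le
  -- complements
  have hsplit1 : (∑ ω ∈ univ.filter (fun ω => η ω ≤ q), P ω)
      + ∑ ω ∈ univ.filter (fun ω => ¬ η ω ≤ q), P ω = 1 := by
    rw [Finset.sum_filter_add_sum_filter_not]; exact hPsum
  have hsplit2 : (∑ ω ∈ univ.filter (fun ω => η ω < q), P ω)
      + ∑ ω ∈ univ.filter (fun ω => ¬ η ω < q), P ω = 1 := by
    rw [Finset.sum_filter_add_sum_filter_not]; exact hPsum
  have hI2 : ∑ ω ∈ univ.filter (fun ω => ¬ η ω ≤ q), P ω ≤ 1 - α := by linarith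
  have hI4 : 1 - α ≤ ∑ ω ∈ univ.filter (fun ω => ¬ η ω < q), P ω := by linarith
  refine ⟨⟨⟨q, rfl⟩, ?_⟩, rfl⟩
  rintro v ⟨z, rfl⟩
  show q + (1 / (1 - α)) * ∑ ω, P ω * max 0 (η ω - q)
      ≤ z + (1 / (1 - α)) * ∑ ω, P ω * max 0 (η ω - z)
  rcases le_or_gt q z with hzq | hzq
  · -- z ≥ q case
    have key : ∑ ω, P ω * max 0 (η ω - q)
        ≤ (∑ ω, P ω * max 0 (η ω - z))
          + (z - q) * ∑ ω ∈ univ.filter (fun ω => ¬ η ω ≤ q), P ω := by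
      rw [Finset.mul_sum, Finset.sum_filter, ← Finset.sum_add_distrib]
      apply Finset.sum_le_sum
      intro ω _
      have hPω := (hP ω).le
      rcases le_or_gt (η ω) q with h | h
      · simp only [h, not_true, if_false, mul_zero, add_zero]
        have : max 0 (η ω - q) = 0 := max_eq_left (by linarith)
        rw [this, mul_zero]
        exact mul_nonneg hPω (le_max_left _ _)
      · simp only [not_le.mpr h, not_false_iff, if_true]
        have h1 : max 0 (η ω - q) = η ω - q := max_eq_right (by linarith)
        have h2 : η ω - z ≤ max 0 (η ω - z) := le_max_right _ _
        rw [h1]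
        nlinarith
    have hbound : (z - q) * ∑ ω ∈ univ.filter (fun ω => ¬ η ω ≤ q), P ω
        ≤ (z - q) * (1 - α) :=
      mul_le_mul_of_nonneg_left hI2 (by linarith)
    have hne : (1 - α) ≠ 0 := h1α.ne'
    have hc : (0:ℝ) ≤ 1 / (1 - α) := by positivity
    have hmul : (1/(1-α)) * (∑ ω, P ω * max 0 (η ω - q))
        ≤ (1/(1-α)) * ((∑ ω, P ω * max 0 (η ω - z)) + (z-q)*(1-α)) := by
      apply mul_le_mul_of_nonneg_left _ hc
      linarith
    have heq : (1/(1-α)) * ((∑ ω, P ω * max 0 (η ω - z)) + (z-q)*(1-α))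
        = (1/(1-α)) * (∑ ω, P ω * max 0 (η ω - z)) + (z-q) := by
      field_simp
    linarith
  · -- z < q case
    have key : (∑ ω, P ω * max 0 (η ω - q))
          + (q - z) * ∑ ω ∈ univ.filter (fun ω => ¬ η ω < q), P ω
        ≤ ∑ ω, P ω * max 0 (η ω - z) := by
      rw [Finset.mul_sum, Finset.sum_filter, ← Finset.sum_add_distrib]
      apply Finset.sum_le_sum
      intro ω _
      have hPω := (hP ω).le
      rcases le_or_gt q (η ω) with h | h
      · simp only [not_lt.mpr h, not_false_iff, if_true]
        have h1 : max 0 (η ω - q) = η ω - q := max_eq_right (by linarith)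
        have h2 : max 0 (η ω - z) = η ω - z := max_eq_right (by linarith)
        rw [h1, h2]; ring_nf; nlinarith
      · simp only [h, not_true, if_false, mul_zero, add_zero]
        have h1 : max 0 (η ω - q) = 0 := max_eq_left (by linarith)
        rw [h1, mul_zero]
        exact mul_nonneg hPω (le_max_left _ _)
    have hbound : (q - z) * (1 - α)
        ≤ (q - z) * ∑ ω ∈ univ.filter (fun ω => ¬ η ω < q), P ω :=
      mul_le_mul_of_nonneg_left hI4 (by linarith)
    have hcS : (1 / (1 - α)) * ((∑ ω, P ω * max 0 (η ω - q)) + (q - z) * (1 - α))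
        ≤ (1 / (1 - α)) * ∑ ω, P ω * max 0 (η ω - z) := by
      apply mul_le_mul_of_nonneg_left _ (by positivity)
      linarith
    have : (1 / (1 - α)) * ((∑ ω, P ω * max 0 (η ω - q)) + (q - z) * (1 - α))
        = (1 / (1 - α)) * (∑ ω, P ω * max 0 (η ω - q)) + (q - z) := by
      field_simp
    linarith [hcS, this ▸ hcS]
end
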